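/- Proposition 1(II): Let G be a finite simple connected graph on vertex set V with at least two vertices, let c : V → ℝ be uniquely balanced with respect to G, and set m₀ := min { |Σ_{v∈S} c(v)| : S a nonempty proper subset of V with G[S] connected }. Then m₀ > 0, and for every spanning subgraph H of G, H is disconnected if and only if val(H, c) ≥ 2·m₀. -/

import Mathlib

open Matrix
open scoped Classical

/-- `c : V → ℝ` is *uniquely balanced* with respect to `G` if its entries sum to zero over `V`,
and sum to a nonzero value over every nonempty proper subset `S ⊊ V` inducing a connected
subgraph of `G`. -/
def UniquelyBalanced {V : Type} [Fintype V] (G : SimpleGraph V) (c : V → ℝ) : Prop :=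
  (∑ v, c v = 0) ∧
    ∀ S : Set V, S.Nonempty → S ≠ Set.univ → (G.induce S).Connected →
      ∑ v ∈ S.toFinset, c v ≠ 0

/-- The optimal value `val(H, c)` of the connectedness LP: minimize `Σ (d₊ + d₋)` over
`θ, d₊, d₋ : V → ℝ` subject to `d₊ ≥ 0`, `d₋ ≥ 0` and `L_H θ = c + d₊ − d₋`. -/
noncomputable def lpVal {V : Type} [Fintype V] [DecidableEq V]
    (H : SimpleGraph V) (c : V → ℝ) : ℝ :=
  sInf {x : ℝ | ∃ θ dp dm : V → ℝ, (∀ v, 0 ≤ dp v) ∧ (∀ v, 0 ≤ dm v) ∧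
    H.lapMatrix ℝ *ᵥ θ = c + dp - dm ∧ x = ∑ v, (dp v + dm v)}

/-- If `L x = 0` then `x ⬝ᵥ (L θ) = 0`, by symmetry of the Laplacian. -/
lemma dot_lap_zero {V : Type} [Fintype V] [DecidableEq V] (H : SimpleGraph V)
    (x θ : V → ℝ) (hx : H.lapMatrix ℝ *ᵥ x = 0) :
    x ⬝ᵥ (H.lapMatrix ℝ *ᵥ θ) = 0 := by
  rw [Matrix.dotProduct_mulVec, ← Matrix.mulVec_transpose, (H.isSymm_lapMatrix ℝ).eq, hx,
    zero_dotProduct]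

/-- The sum of `L θ` over a connected component vanishes. -/
lemma comp_sum_lap_zero {V : Type} [Fintype V] [DecidableEq V] (H : SimpleGraph V)
    (comp : H.ConnectedComponent) (θ : V → ℝ) :
    ∑ v ∈ Finset.univ.filter (fun v => H.connectedComponentMk v = comp),
      (H.lapMatrix ℝ *ᵥ θ) v = 0 := by
  have hker : H.lapMatrix ℝ *ᵥ (fun i => if H.connectedComponentMk i = comp then (1:ℝ) else 0)
      = 0 := by
    have h := SimpleGraph.mem_ker_toLin'_lapMatrix_of_connectedComponent (G := H) comp
    rwa [LinearMap.mem_ker, Matrix.toLin'_apply] at h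
  have h2 := dot_lap_zero H _ θ hker
  rw [dotProduct] at h2
  rw [← h2, Finset.sum_filter]
  exact Finset.sum_congr rfl (fun v _ => by split_ifs <;> simp)

lemma walk_reach_induce {V : Type} (G H : SimpleGraph V) (hHG : H ≤ G) (S : Set V)
    (hS : ∀ a ∈ S, ∀ b, H.Adj a b → b ∈ S) :
    ∀ {u v : V} (_ : H.Walk u v) (hu : u ∈ S) (hv : v ∈ S),
      (G.induce S).Reachable ⟨u, hu⟩ ⟨v, hv⟩ := by
  intro u v p
  induction p with
  | nil => intro hu hv; exact SimpleGraph.Reachable.refl _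
  | @cons u w v h q ih =>
      intro hu hv
      have hw : w ∈ S := hS _ hu _ h
      have hadj : (G.induce S).Adj ⟨u, hu⟩ ⟨w, hw⟩ := hHG h
      exact hadj.reachable.trans (ih hw hv)

/-- For a connected graph, every vector summing to zero is in the range of the Laplacian. -/
lemma lap_surj {V : Type} [Fintype V] [DecidableEq V] (H : SimpleGraph V)
    (hH : H.Connected) (c : V → ℝ) (hsum : ∑ v, c v = 0) :
    ∃ θ : V → ℝ, H.lapMatrix ℝ *ᵥ θ = c := by
  set f := Matrix.toLin' (H.lapMatrix ℝ) with hf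
  let σ : (V → ℝ) →ₗ[ℝ] ℝ :=
    { toFun := fun x => ∑ v, x v
      map_add' := fun x y => by simp [Finset.sum_add_distrib]
      map_smul' := fun r x => by simp [Finset.mul_sum] }
  have hkerf : Module.finrank ℝ (LinearMap.ker f) = 1 := by
    rw [← SimpleGraph.card_connectedComponent_eq_finrank_ker_toLin'_lapMatrix]
    rw [Fintype.card_eq_one_iff]
    obtain ⟨v₀⟩ := hH.nonempty
    refine ⟨H.connectedComponentMk v₀, ?_⟩
    intro y
    induction y using SimpleGraph.ConnectedComponent.ind with
    | _ w => exact SimpleGraph.ConnectedComponent.sound (hH.preconnected w v₀)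
  have hσsurj : LinearMap.range σ = ⊤ := by
    rw [LinearMap.range_eq_top]
    intro r
    obtain ⟨v₀⟩ := hH.nonempty
    exact ⟨Pi.single v₀ r, by simp [σ, Finset.sum_pi_single']⟩
  have hkerσ : Module.finrank ℝ (LinearMap.ker σ) + 1 = Fintype.card V := by
    have := LinearMap.finrank_range_add_finrank_ker σ
    rw [hσsurj, Module.finrank_fintype_fun_eq_card] at this
    rw [finrank_top, Module.finrank_self] at this
    omega
  have hrangef : Module.finrank ℝ (LinearMap.range f) + 1 = Fintype.card V := by
    have := LinearMap.finrank_range_add_finrank_ker f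
    rw [hkerf, Module.finrank_fintype_fun_eq_card] at this
    exact this
  have hle : LinearMap.range f ≤ LinearMap.ker σ := by
    rintro _ ⟨θ, rfl⟩
    have h0 : (fun _ : V => (1:ℝ)) ⬝ᵥ (H.lapMatrix ℝ *ᵥ θ) = 0 :=
      dot_lap_zero H _ θ (H.lapMatrix_mulVec_const_eq_zero)
    rw [dotProduct] at h0
    simp only [one_mul] at h0
    simpa [σ, hf, Matrix.toLin'_apply] using h0
  have heq : LinearMap.range f = LinearMap.ker σ :=
    Submodule.eq_of_le_of_finrank_eq hle (by omega)
  have hc : c ∈ LinearMap.ker σ := by simpa [σ] using hsum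
  rw [← heq] at hc
  obtain ⟨θ, hθ⟩ := hc
  exact ⟨θ, by rw [← hθ]; simp [hf, Matrix.toLin'_apply]⟩

/-- **Proposition 1(II).** Let `G` be a finite simple connected graph on at least
two vertices and `c` uniquely balanced w.r.t. `G`. Let `m₀` be the minimum of
`|Σ_{v ∈ S} c v|` over nonempty proper `S ⊊ V` with `G[S]` connected. Then `m₀ > 0`, and a
spanning subgraph `H ≤ G` is disconnected iff `val(H, c) ≥ 2 m₀`. -/
theorem prop1_II
    {V : Type} [Fintype V] [DecidableEq V]
    (G : SimpleGraph V) (hG : G.Connected) (hcard : 2 ≤ Fintype.card V)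
    (c : V → ℝ) (hc : UniquelyBalanced G c)
    (m₀ : ℝ)
    (hm₀ : IsLeast {x : ℝ | ∃ S : Set V, S.Nonempty ∧ S ≠ Set.univ ∧
      (G.induce S).Connected ∧ x = |∑ v ∈ S.toFinset, c v|} m₀) :
    0 < m₀ ∧ ∀ H : SimpleGraph V, H ≤ G → (¬ H.Connected ↔ 2 * m₀ ≤ lpVal H c) := by
  obtain ⟨hm_mem, hm_lb⟩ := hm₀
  have hm_pos : 0 < m₀ := by
    obtain ⟨S, hS1, hS2, hS3, hS4⟩ := hm_mem
    have hne := hc.2 S hS1 hS2 hS3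
    rw [hS4]
    exact abs_pos.mpr hne
  refine ⟨hm_pos, fun H hHG => ?_⟩
  have hA0 : ∀ x ∈ {x : ℝ | ∃ θ dp dm : V → ℝ, (∀ v, 0 ≤ dp v) ∧ (∀ v, 0 ≤ dm v) ∧
      H.lapMatrix ℝ *ᵥ θ = c + dp - dm ∧ x = ∑ v, (dp v + dm v)}, (0:ℝ) ≤ x := by
    rintro x ⟨θ, dp, dm, hdp, hdm, hL, rfl⟩
    exact Finset.sum_nonneg (fun v _ => add_nonneg (hdp v) (hdm v))
  have hAne : {x : ℝ | ∃ θ dp dm : V → ℝ, (∀ v, 0 ≤ dp v) ∧ (∀ v, 0 ≤ dm v) ∧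
      H.lapMatrix ℝ *ᵥ θ = c + dp - dm ∧ x = ∑ v, (dp v + dm v)}.Nonempty := by
    refine ⟨_, 0, fun v => max (-c v) 0, fun v => max (c v) 0,
      fun v => le_max_right _ _, fun v => le_max_right _ _, ?_, rfl⟩
    rw [Matrix.mulVec_zero]
    funext v
    simp only [Pi.sub_apply, Pi.add_apply, Pi.zero_apply]
    rcases le_total (c v) 0 with h | h
    · rw [max_eq_left (by linarith), max_eq_right h]; ring
    · rw [max_eq_right (by linarith), max_eq_left h]; ring
  constructor
  · intro hdis
    rw [lpVal]
    apply le_csInf hAne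
    rintro x ⟨θ, dp, dm, hdp, hdm, hL, rfl⟩
    have hV : Nonempty V := Fintype.card_pos_iff.mp (by omega)
    obtain ⟨a, b, hab⟩ : ∃ a b : V, ¬ H.Reachable a b := by
      by_contra hcon
      push_neg at hcon
      exact hdis ((SimpleGraph.connected_iff H).mpr ⟨hcon, hV⟩)
    set F : H.ConnectedComponent → ℝ := fun comp =>
      ∑ v ∈ Finset.univ.filter (fun v => H.connectedComponentMk v = comp), (dp v + dm v)
      with hF
    have hcompsum : ∀ comp : H.ConnectedComponent, m₀ ≤ F comp := by
      intro comp
      set S : Set V := {v | H.connectedComponentMk v = comp} with hSdef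
      have hTS : S.toFinset = Finset.univ.filter
          (fun v => H.connectedComponentMk v = comp) := by
        ext v; simp [hSdef]
      obtain ⟨v₀, hv₀⟩ := Quot.exists_rep comp
      have hSne : S.Nonempty := ⟨v₀, hv₀⟩
      have hclosed : ∀ a ∈ S, ∀ b, H.Adj a b → b ∈ S := by
        intro a ha b hadj
        have : H.connectedComponentMk b = H.connectedComponentMk a :=
          SimpleGraph.ConnectedComponent.sound hadj.symm.reachable
        rw [Set.mem_setOf_eq, this]; exact ha
      have hSuniv : S ≠ Set.univ := by
        intro hu
        have ha : a ∈ S := hu ▸ Set.mem_univ a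
        have hb : b ∈ S := hu ▸ Set.mem_univ b
        exact hab (SimpleGraph.ConnectedComponent.exact (ha.trans hb.symm))
      have hScon : (G.induce S).Connected := by
        rw [SimpleGraph.connected_iff]
        refine ⟨?_, ⟨⟨v₀, hv₀⟩⟩⟩
        rintro ⟨u, hu⟩ ⟨w, hw⟩
        have hr : H.Reachable u w :=
          SimpleGraph.ConnectedComponent.exact (hu.trans hw.symm)
        obtain ⟨p⟩ := hr
        exact walk_reach_induce G H hHG S hclosed p hu hw
      have hmem : m₀ ≤ |∑ v ∈ S.toFinset, c v| := hm_lb ⟨S, hSne, hSuniv, hScon, rfl⟩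
      have hz : ∑ v ∈ Finset.univ.filter (fun v => H.connectedComponentMk v = comp),
          (H.lapMatrix ℝ *ᵥ θ) v = 0 := comp_sum_lap_zero H comp θ
      rw [hL] at hz
      simp only [Pi.sub_apply, Pi.add_apply] at hz
      rw [Finset.sum_sub_distrib, Finset.sum_add_distrib] at hz
      have hceq : ∑ v ∈ Finset.univ.filter (fun v => H.connectedComponentMk v = comp), c v
          = ∑ v ∈ Finset.univ.filter (fun v => H.connectedComponentMk v = comp), (dm v - dp v)
          := by rw [Finset.sum_sub_distrib]; linarith
      calc m₀ ≤ |∑ v ∈ S.toFinset, c v| := hmem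
        _ = |∑ v ∈ Finset.univ.filter (fun v => H.connectedComponentMk v = comp),
              (dm v - dp v)| := by rw [hTS, hceq]
        _ ≤ ∑ v ∈ Finset.univ.filter (fun v => H.connectedComponentMk v = comp),
              |dm v - dp v| := Finset.abs_sum_le_sum_abs _ _
        _ ≤ F comp := by
            apply Finset.sum_le_sum
            intro v _
            rw [abs_sub_comm]
            calc |dp v - dm v| ≤ |dp v| + |dm v| := abs_sub _ _
              _ = dp v + dm v := by rw [abs_of_nonneg (hdp v), abs_of_nonneg (hdm v)]
    have habne : H.connectedComponentMk a ≠ H.connectedComponentMk b :=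
      fun h => hab (SimpleGraph.ConnectedComponent.exact h)
    have hsum_eq : ∑ v, (dp v + dm v) = ∑ comp : H.ConnectedComponent, F comp :=
      (Finset.sum_fiberwise _ _ _).symm
    have hpair : 2 * m₀ ≤ ∑ comp ∈ ({H.connectedComponentMk a, H.connectedComponentMk b} :
        Finset H.ConnectedComponent), F comp := by
      rw [Finset.sum_pair habne]
      linarith [hcompsum (H.connectedComponentMk a), hcompsum (H.connectedComponentMk b)]
    have hfull : ∑ comp ∈ ({H.connectedComponentMk a, H.connectedComponentMk b} :
        Finset H.ConnectedComponent), F comp ≤ ∑ comp : H.ConnectedComponent, F comp :=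
      Finset.sum_le_sum_of_subset_of_nonneg (Finset.subset_univ _)
        (fun i _ _ => le_trans hm_pos.le (hcompsum i))
    rw [hsum_eq]
    linarith
  · intro hge
    intro hconn
    obtain ⟨θ, hθ⟩ := lap_surj H hconn c hc.1
    have h0mem : (0:ℝ) ∈ {x : ℝ | ∃ θ dp dm : V → ℝ, (∀ v, 0 ≤ dp v) ∧ (∀ v, 0 ≤ dm v) ∧
        H.lapMatrix ℝ *ᵥ θ = c + dp - dm ∧ x = ∑ v, (dp v + dm v)} :=
      ⟨θ, 0, 0, fun v => le_refl 0, fun v => le_refl 0, by simp [hθ], by simp⟩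
    have hle : lpVal H c ≤ 0 := csInf_le ⟨0, hA0⟩ h0mem
    linarith
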